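/- For every integer n ≥ 1, there exists an NFA with n states and n letters that admits a mortal word and whose shortest mortal word has length exactly 2^n - 1. -/

import Mathlib

/-- The action of an NFA with transition function `Δ` on a set of states,
extended homomorphically to words. -/
def wordImage {Q σ : Type*} (Δ : Q → σ → Set Q) : Set Q → List σ → Set Q
  | S, [] => S
  | S, a :: w => wordImage Δ (⋃ q ∈ S, Δ q a) w

lemma geom (t : ℕ) : ∑ i ∈ Finset.range t, 2 ^ i = 2 ^ t - 1 := by
  induction t with
  | zero => simp
  | succ t ih =>
    rw [Finset.sum_range_succ, ih]
    have h1 : 1 ≤ 2 ^ t := Nat.one_le_two_pow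
    have h2 : (2:ℕ) ^ (t+1) = 2 * 2 ^ t := by ring
    omega

lemma divHelper (r q c k : ℕ) (h : k ≤ c) : (r + q * 2 ^ c) / 2 ^ k = r / 2 ^ k + q * 2 ^ (c - k) := by
  obtain ⟨d, rfl⟩ : ∃ d, c = k + d := ⟨c - k, by omega⟩
  have h1 : q * 2 ^ (k + d) = (q * 2 ^ d) * 2 ^ k := by ring
  rw [h1, Nat.add_mul_div_right _ _ (Nat.two_pow_pos _)]
  rw [Nat.add_sub_cancel_left]

lemma powSubOneDiv (a k : ℕ) (h : k ≤ a) : (2 ^ a - 1) / 2 ^ k = 2 ^ (a - k) - 1 := by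
  obtain ⟨d, rfl⟩ : ∃ d, a = k + d := ⟨a - k, by omega⟩
  have h1 : (2:ℕ) ^ (k + d) = 2 ^ d * 2 ^ k := by ring
  have hk : 1 ≤ (2:ℕ) ^ k := Nat.one_le_two_pow
  have hd : 1 ≤ (2:ℕ) ^ d := Nat.one_le_two_pow
  have h2 : (2:ℕ) ^ (k+d) - 1 = (2 ^ k - 1) + (2 ^ d - 1) * 2 ^ k := by
    rw [h1, Nat.sub_one_mul]
    have : 2 ^ k ≤ 2 ^ d * 2 ^ k := Nat.le_mul_of_pos_left _ (by omega)
    omega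
  rw [h2, Nat.add_mul_div_right _ _ (Nat.two_pow_pos _),
    Nat.div_eq_of_lt (by omega)]
  simp

-- bit lemmas for m+1 = 2^b + q*2^(b+1) and m = q*2^(b+1) + (2^b - 1)
lemma aux1 (b q k : ℕ) (h : k < b) : (2 ^ b + q * 2 ^ (b+1)) / 2 ^ k % 2 = 0 := by
  rw [divHelper _ _ _ _ (by omega)]
  obtain ⟨d, rfl⟩ : ∃ d, b = k + (d + 1) := ⟨b - k - 1, by omega⟩
  have h1 : (2:ℕ) ^ (k + (d+1)) = 2 ^ d * 2 * 2 ^ k := by ring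
  have h2 : (2:ℕ) ^ (k + (d+1)) / 2 ^ k = 2 ^ d * 2 := by
    rw [h1, Nat.mul_div_cancel _ (Nat.two_pow_pos _)]
  have h3 : k + (d + 1) + 1 - k = d + 2 := by omega
  rw [h2, h3]
  have h4 : (2:ℕ) ^ (d + 2) = 2 ^ d * 4 := by ring
  rw [h4]
  have h6 : q * (2 ^ d * 4) = 2 * (q * (2 ^ d * 2)) := by ring
  omega

lemma aux2 (b q : ℕ) : (2 ^ b + q * 2 ^ (b+1)) / 2 ^ b % 2 = 1 := by
  rw [divHelper _ _ _ _ (by omega), Nat.div_self (Nat.two_pow_pos _)]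
  have h3 : b + 1 - b = 1 := by omega
  rw [h3]
  omega

lemma aux3 (b q k : ℕ) (h : b < k) :
    (2 ^ b + q * 2 ^ (b+1)) / 2 ^ k = (q * 2 ^ (b+1) + (2 ^ b - 1)) / 2 ^ k := by
  obtain ⟨t, rfl⟩ : ∃ t, k = (b + 1) + t := ⟨k - b - 1, by omega⟩
  have hp : (2:ℕ) ^ (b + 1 + t) = 2 ^ (b+1) * 2 ^ t := by ring
  have hb1 : (2:ℕ) ^ b < 2 ^ (b+1) := by
    have : (2:ℕ)^(b+1) = 2 * 2^b := by ring
    have := Nat.one_le_two_pow (n := b); omega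
  rw [hp, ← Nat.div_div_eq_div_mul, ← Nat.div_div_eq_div_mul]
  congr 1
  rw [divHelper _ _ _ _ (le_refl _), Nat.add_comm (q * 2 ^ (b+1)),
    divHelper _ _ _ _ (le_refl _)]
  rw [Nat.div_eq_of_lt hb1, Nat.div_eq_of_lt (by omega)]

lemma aux4 (b q k : ℕ) (h : k < b) : (q * 2 ^ (b+1) + (2 ^ b - 1)) / 2 ^ k % 2 = 1 := by
  rw [Nat.add_comm, divHelper _ _ _ _ (by omega), powSubOneDiv _ _ (by omega)]
  obtain ⟨d, rfl⟩ : ∃ d, b = k + (d + 1) := ⟨b - k - 1, by omega⟩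
  have h1 : k + (d+1) - k = d + 1 := by omega
  have h2 : k + (d+1) + 1 - k = d + 2 := by omega
  rw [h1, h2]
  have h3 : (2:ℕ) ^ (d + 2) = 2 ^ d * 4 := by ring
  have h4 : (2:ℕ) ^ (d + 1) = 2 ^ d * 2 := by ring
  have h5 : 1 ≤ (2:ℕ) ^ d := Nat.one_le_two_pow
  rw [h3, h4]
  have h6 : q * (2 ^ d * 4) = 2 * (q * (2 ^ d * 2)) := by ring
  omega

lemma aux5 (b q : ℕ) : (q * 2 ^ (b+1) + (2 ^ b - 1)) / 2 ^ b % 2 = 0 := by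
  rw [Nat.add_comm, divHelper _ _ _ _ (by omega),
    Nat.div_eq_of_lt (by have := Nat.one_le_two_pow (n := b); omega)]
  have h3 : b + 1 - b = 1 := by omega
  rw [h3]
  omega

lemma decomp : ∀ m : ℕ, 0 < m → ∃ b q, m = 2 ^ b + q * 2 ^ (b+1) := by
  intro m
  induction m using Nat.strong_induction_on with
  | _ m ih =>
    intro hm
    rcases Nat.even_or_odd m with ⟨m', hm'⟩ | ⟨k, hk⟩
    · obtain ⟨b, q, hbq⟩ := ih m' (by omega) (by omega)
      exact ⟨b + 1, q, by rw [hm', hbq]; ring⟩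
    · exact ⟨0, k, by rw [hk]; ring⟩

/-- Transitions: letter smaller than state → everything; larger → self-loop;
equal → all strictly larger states. -/
def Dfun (n : ℕ) : Fin n → Fin n → Set (Fin n) := fun q a =>
  if a < q then Set.univ else if q < a then {q} else Set.Ioi q

noncomputable def phi (n : ℕ) (S : Set (Fin n)) : ℕ :=
  ∑ i : Fin n, S.indicator (fun i => 2 ^ (n - 1 - i.val)) i

lemma phi_empty (n : ℕ) : phi n (∅ : Set (Fin n)) = 0 := by simp [phi]

lemma phi_mono {n : ℕ} {S T : Set (Fin n)} (h : S ⊆ T) : phi n S ≤ phi n T := by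
  classical
  refine Finset.sum_le_sum fun i _ => ?_
  by_cases hi : i ∈ S
  · rw [Set.indicator_of_mem hi, Set.indicator_of_mem (h hi)]
  · rw [Set.indicator_of_notMem hi]; exact Nat.zero_le _

lemma phi_univ (n : ℕ) : phi n (Set.univ : Set (Fin n)) = 2 ^ n - 1 := by
  classical
  simp only [phi, Set.indicator_univ]
  rw [Fin.sum_univ_eq_sum_range (fun x => 2 ^ (n - 1 - x)), Finset.sum_range_reflect (fun x => 2 ^ x) n]
  exact geom n

lemma sum_tail {n : ℕ} (j : Fin n) :
    ∑ i : Fin n, (if j < i then 2 ^ (n - 1 - i.val) else 0) = 2 ^ (n - 1 - j.val) - 1 := by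
  classical
  have hj : j.val < n := j.isLt
  have e1 : ∀ i : Fin n, (if j < i then 2 ^ (n - 1 - i.val) else 0)
      = (fun x => if j.val < x then 2 ^ (n - 1 - x) else 0) i.val := by
    intro i; exact if_congr Fin.lt_def rfl rfl
  rw [Finset.sum_congr rfl (fun i _ => e1 i),
    Fin.sum_univ_eq_sum_range (fun x => if j.val < x then 2 ^ (n - 1 - x) else 0)]
  rw [← Finset.sum_range_reflect (fun x => if j.val < x then 2 ^ (n - 1 - x) else 0) n]
  have e2 : ∀ x ∈ Finset.range n,
      (if j.val < n - 1 - x then 2 ^ (n - 1 - (n - 1 - x)) else 0)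
      = (if x < n - 1 - j.val then 2 ^ x else 0) := by
    intro x hx
    rw [Finset.mem_range] at hx
    by_cases hc : j.val < n - 1 - x
    · rw [if_pos hc, if_pos (by omega)]; congr 1; omega
    · rw [if_neg hc, if_neg (by omega)]
  rw [Finset.sum_congr rfl e2]
  rw [← Finset.sum_subset (Finset.range_subset_range.2 (show n - 1 - j.val ≤ n by omega))
    (fun x _ hx => by rw [Finset.mem_range] at hx; exact if_neg (by omega))]
  rw [Finset.sum_congr rfl (fun x hx => if_pos (Finset.mem_range.1 hx))]
  exact geom _

lemma step_univ {n : ℕ} {S : Set (Fin n)} {j i : Fin n} (hi : i ∈ S) (hj : j < i) :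
    (⋃ q ∈ S, Dfun n q j) = Set.univ := by
  apply Set.eq_univ_of_univ_subset
  intro x _
  refine Set.mem_biUnion hi ?_
  simp [Dfun, hj]

lemma step_not_mem {n : ℕ} {S : Set (Fin n)} {j : Fin n} (hS : ∀ i ∈ S, i ≤ j) (hj : j ∉ S) :
    (⋃ q ∈ S, Dfun n q j) = S := by
  ext x
  simp only [Set.mem_iUnion, exists_prop]
  constructor
  · rintro ⟨q, hq, hx⟩
    have h1 : q < j := lt_of_le_of_ne (hS q hq) (fun h => hj (h ▸ hq))
    simp [Dfun, h1, not_lt.2 (le_of_lt h1)] at hx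
    exact hx ▸ hq
  · intro hx
    have h1 : x < j := lt_of_le_of_ne (hS x hx) (fun h => hj (h ▸ hx))
    exact ⟨x, hx, by simp [Dfun, h1, not_lt.2 (le_of_lt h1)]⟩

lemma step_mem {n : ℕ} {S : Set (Fin n)} {j : Fin n} (hS : ∀ i ∈ S, i ≤ j) (hj : j ∈ S) :
    (⋃ q ∈ S, Dfun n q j) = (S ∩ Set.Iio j) ∪ Set.Ioi j := by
  ext x
  simp only [Set.mem_iUnion, exists_prop]
  constructor
  · rintro ⟨q, hq, hx⟩
    rcases eq_or_lt_of_le (hS q hq) with rfl | hlt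
    · simp only [Dfun, lt_irrefl, if_neg (lt_irrefl _)] at hx
      exact Or.inr hx
    · simp [Dfun, hlt, not_lt.2 (le_of_lt hlt)] at hx
      exact Or.inl ⟨hx ▸ hq, hx ▸ hlt⟩
  · rintro (⟨hxS, hxlt⟩ | hx)
    · rw [Set.mem_Iio] at hxlt
      exact ⟨x, hxS, by simp [Dfun, hxlt, not_lt.2 (le_of_lt hxlt)]⟩
    · exact ⟨j, hj, by simp only [Dfun, lt_irrefl, if_neg (lt_irrefl _)]; exact hx⟩

lemma phi_split {n : ℕ} {S : Set (Fin n)} {j : Fin n} (hS : ∀ i ∈ S, i ≤ j) (hj : j ∈ S) :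
    phi n S = phi n (S ∩ Set.Iio j) + 2 ^ (n - 1 - j.val) := by
  classical
  have key : ∀ i : Fin n, S.indicator (fun i => 2 ^ (n - 1 - i.val)) i
      = (S ∩ Set.Iio j).indicator (fun i => 2 ^ (n - 1 - i.val)) i
        + (if i = j then 2 ^ (n - 1 - i.val) else 0) := by
    intro i
    by_cases hij : i = j
    · subst hij
      rw [if_pos rfl, Set.indicator_of_mem hj,
        Set.indicator_of_notMem (by simp [Set.mem_Iio])]
      exact (zero_add _).symm
    · rw [if_neg hij, add_zero]
      by_cases hiS : i ∈ S
      · rw [Set.indicator_of_mem hiS,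
          Set.indicator_of_mem
            (Set.mem_inter hiS (Set.mem_Iio.2 (lt_of_le_of_ne (hS i hiS) hij)))]
      · rw [Set.indicator_of_notMem hiS,
          Set.indicator_of_notMem (fun h => hiS h.1)]
  rw [phi, Finset.sum_congr rfl (fun i _ => key i), Finset.sum_add_distrib,
    Finset.sum_ite_eq' Finset.univ j (fun i => 2 ^ (n - 1 - i.val)),
    if_pos (Finset.mem_univ j)]
  rfl

lemma phi_union {n : ℕ} {S : Set (Fin n)} {j : Fin n} (h : S ⊆ Set.Iio j) :
    phi n (S ∪ Set.Ioi j) = phi n S + (2 ^ (n - 1 - j.val) - 1) := by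
  classical
  have key : ∀ i : Fin n, (S ∪ Set.Ioi j).indicator (fun i => 2 ^ (n - 1 - i.val)) i
      = S.indicator (fun i => 2 ^ (n - 1 - i.val)) i
        + (if j < i then 2 ^ (n - 1 - i.val) else 0) := by
    intro i
    by_cases hiS : i ∈ S
    · have : ¬ j < i := not_lt.2 (le_of_lt (h hiS))
      rw [if_neg this, add_zero, Set.indicator_of_mem (Set.mem_union_left _ hiS),
        Set.indicator_of_mem hiS]
    · rw [Set.indicator_of_notMem hiS, zero_add]
      by_cases hji : j < i
      · rw [if_pos hji, Set.indicator_of_mem (Set.mem_union_right _ (Set.mem_Ioi.2 hji))]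
      · rw [if_neg hji, Set.indicator_of_notMem]
        rintro (h1 | h2)
        · exact hiS h1
        · exact hji h2
  rw [phi, Finset.sum_congr rfl (fun i _ => key i), Finset.sum_add_distrib, sum_tail]
  rfl

lemma key_step {n : ℕ} (S : Set (Fin n)) (j : Fin n) :
    phi n S ≤ phi n (⋃ q ∈ S, Dfun n q j) + 1 := by
  by_cases hA : ∃ i ∈ S, j < i
  · obtain ⟨i, hi, hji⟩ := hA
    rw [step_univ hi hji]
    exact le_trans (phi_mono (Set.subset_univ S)) (Nat.le_succ _)
  · push_neg at hA
    have hS : ∀ i ∈ S, i ≤ j := hA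
    by_cases hj : j ∈ S
    · rw [step_mem hS hj, phi_union Set.inter_subset_right, phi_split hS hj]
      have : 1 ≤ 2 ^ (n - 1 - j.val) := Nat.one_le_two_pow
      omega
    · rw [step_not_mem hS hj]
      exact Nat.le_succ _

/-- The set of states encoding the number `m` in binary (state `i` ↔ bit `n-1-i`). -/
def Sset (n m : ℕ) : Set (Fin n) := {i | m / 2 ^ (n - 1 - i.val) % 2 = 1}

lemma step_Sm {n : ℕ} (b q m : ℕ) (hb : b < n) (hm1 : m + 1 = 2 ^ b + q * 2 ^ (b+1)) :
    (⋃ p ∈ Sset n (m+1), Dfun n p ⟨n - 1 - b, by omega⟩) = Sset n m := by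
  set j : Fin n := ⟨n - 1 - b, by omega⟩ with hjdef
  have hjval : j.val = n - 1 - b := rfl
  have hA : 1 ≤ 2 ^ b := Nat.one_le_two_pow
  have hm0 : m = q * 2 ^ (b+1) + (2 ^ b - 1) := by omega
  have hS : ∀ i ∈ Sset n (m+1), i ≤ j := by
    intro i hi
    simp only [Sset, Set.mem_setOf_eq] at hi
    rw [Fin.le_def, hjval]
    by_contra hlt
    push_neg at hlt
    have hik := i.isLt
    have hk : n - 1 - i.val < b := by omega
    rw [hm1, aux1 b q _ hk] at hi
    exact absurd hi (by norm_num)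
  have hj : j ∈ Sset n (m+1) := by
    show (m+1) / 2 ^ (n - 1 - j.val) % 2 = 1
    have hb' : n - 1 - j.val = b := by rw [hjval]; omega
    rw [hb', hm1]
    exact aux2 b q
  rw [step_mem hS hj]
  ext i
  have hik := i.isLt
  simp only [Set.mem_union, Set.mem_inter_iff, Set.mem_Iio, Set.mem_Ioi, Sset,
    Set.mem_setOf_eq]
  rcases lt_trichotomy (n - 1 - i.val) b with hlt | heq | hgt
  · have hji : j < i := by rw [Fin.lt_def, hjval]; omega
    exact iff_of_true (Or.inr hji) (by rw [hm0]; exact aux4 b q _ hlt)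
  · have hij : i = j := by apply Fin.ext; rw [hjval]; omega
    refine iff_of_false ?_ ?_
    · rintro (⟨_, hlt'⟩ | hgt')
      · exact absurd (hij ▸ hlt') (lt_irrefl j)
      · exact absurd (hij ▸ hgt') (lt_irrefl j)
    · rw [heq, hm0, aux5 b q]
      norm_num
  · have hji : i < j := by rw [Fin.lt_def, hjval]; omega
    constructor
    · rintro (⟨h1, _⟩ | hgt')
      · rw [hm1, aux3 b q _ hgt] at h1
        rwa [hm0]
      · exact absurd hgt' (asymm hji)
    · intro h1
      refine Or.inl ⟨?_, hji⟩
      rw [hm1, aux3 b q _ hgt, ← hm0]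
      exact h1

lemma upper {n : ℕ} (hn : 1 ≤ n) :
    ∀ m : ℕ, m ≤ 2 ^ n - 1 →
      ∃ w : List (Fin n), w.length = m ∧ wordImage (Dfun n) (Sset n m) w = ∅ := by
  intro m
  induction m with
  | zero =>
    intro _
    refine ⟨[], rfl, ?_⟩
    show Sset n 0 = ∅
    ext i
    simp [Sset]
  | succ m ih =>
    intro hle
    obtain ⟨b, q, hm1⟩ := decomp (m+1) (Nat.succ_pos m)
    have hb : b < n := by
      have h1 : 2 ^ b ≤ m + 1 := by omega
      have h2 : m + 1 < 2 ^ n := by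
        have := Nat.one_le_two_pow (n := n); omega
      exact (Nat.pow_lt_pow_iff_right (by norm_num)).1 (lt_of_le_of_lt h1 h2)
    obtain ⟨w, hwl, hw⟩ := ih (by omega)
    refine ⟨(⟨n - 1 - b, by omega⟩ : Fin n) :: w, by simp [hwl], ?_⟩
    show wordImage (Dfun n) (⋃ p ∈ Sset n (m+1), Dfun n p ⟨n - 1 - b, by omega⟩) w = ∅
    rw [step_Sm b q m hb hm1]
    exact hw

lemma Sset_top {n : ℕ} (hn : 1 ≤ n) : Sset n (2 ^ n - 1) = Set.univ := by
  ext i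
  have hik := i.isLt
  simp only [Sset, Set.mem_setOf_eq, Set.mem_univ, iff_true]
  rw [powSubOneDiv n _ (by omega)]
  obtain ⟨d, hd⟩ : ∃ d, n - (n - 1 - i.val) = d + 1 := ⟨n - (n - 1 - i.val) - 1, by omega⟩
  rw [hd, pow_succ]
  have : 1 ≤ (2:ℕ) ^ d := Nat.one_le_two_pow
  omega

lemma mortal_lower {n : ℕ} :
    ∀ (w : List (Fin n)) (S : Set (Fin n)),
      wordImage (Dfun n) S w = ∅ → phi n S ≤ w.length := by
  intro w
  induction w with
  | nil =>
    intro S h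
    have hS : S = ∅ := h
    rw [hS, phi_empty]
    exact Nat.zero_le _
  | cons a w ih =>
    intro S h
    have h2 : phi n (⋃ q ∈ S, Dfun n q a) ≤ w.length := ih _ h
    have h3 := key_step S a
    simp only [List.length_cons]
    omega

theorem stmt4 (n : ℕ) (hn : 1 ≤ n) :
    ∃ Δ : Fin n → Fin n → Set (Fin n),
      ∃ w : List (Fin n), wordImage Δ Set.univ w = ∅ ∧ w.length = 2 ^ n - 1 ∧
        ∀ v : List (Fin n), wordImage Δ Set.univ v = ∅ → 2 ^ n - 1 ≤ v.length := by
  refine ⟨Dfun n, ?_⟩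
  obtain ⟨w, hwl, hw⟩ := upper hn (2 ^ n - 1) le_rfl
  rw [Sset_top hn] at hw
  refine ⟨w, hw, hwl, fun v hv => ?_⟩
  have := mortal_lower v Set.univ hv
  rwa [phi_univ] at this
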